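/- The Fibonacci hybrid quaternion satisfies the Binet formula F̂_n = (α*·α̲·αⁿ - β*·β̲·βⁿ)/(α - β), where α = (1+√5)/2, β = (1-√5)/2, α* = 1 + 𝐢α + εα² + 𝐡α³, β* = 1 + 𝐢β + εβ² + 𝐡β³, α̲ = 1 + iα + jα² + kα³, β̲ = 1 + iβ + jβ² + kβ³. -/

import Mathlib

/-- A hybrid number over a ring `R`: `re + imI·𝐢 + imE·ε + imH·𝐡` with
`𝐢² = -1`, `ε² = 0`, `𝐡² = 1`, `𝐢ε = 1 - 𝐡`, `ε𝐢 = 1 + 𝐡`,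
`𝐢𝐡 = ε + 𝐢`, `𝐡𝐢 = -ε - 𝐢`, `ε𝐡 = -ε`, `𝐡ε = ε`. -/
@[ext]
structure Hybrid (R : Type*) where
  re : R
  imI : R
  imE : R
  imH : R

namespace Hybrid

variable {R : Type*} [Ring R]

instance : Zero (Hybrid R) := ⟨⟨0, 0, 0, 0⟩⟩
instance : One (Hybrid R) := ⟨⟨1, 0, 0, 0⟩⟩
instance : Add (Hybrid R) :=
  ⟨fun x y => ⟨x.re + y.re, x.imI + y.imI, x.imE + y.imE, x.imH + y.imH⟩⟩
instance : Neg (Hybrid R) := ⟨fun x => ⟨-x.re, -x.imI, -x.imE, -x.imH⟩⟩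
instance : Sub (Hybrid R) :=
  ⟨fun x y => ⟨x.re - y.re, x.imI - y.imI, x.imE - y.imE, x.imH - y.imH⟩⟩

/-- Multiplication of hybrid numbers, obtained by bilinear extension of the
multiplication table of the hybrid units (units commute with coefficients). -/
instance : Mul (Hybrid R) := ⟨fun x y =>
  ⟨x.re * y.re - x.imI * y.imI + x.imI * y.imE + x.imE * y.imI + x.imH * y.imH,
   x.re * y.imI + x.imI * y.re + x.imI * y.imH - x.imH * y.imI,
   x.re * y.imE + x.imE * y.re + x.imI * y.imH - x.imH * y.imI
     + x.imH * y.imE - x.imE * y.imH,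
   x.re * y.imH + x.imH * y.re + x.imE * y.imI - x.imI * y.imE⟩⟩

instance {S : Type*} [SMul S R] : SMul S (Hybrid R) :=
  ⟨fun s x => ⟨s • x.re, s • x.imI, s • x.imE, s • x.imH⟩⟩

/-- The hybrid unit `𝐢`. -/
def iu : Hybrid R := ⟨0, 1, 0, 0⟩
/-- The hybrid unit `ε`. -/
def eu : Hybrid R := ⟨0, 0, 1, 0⟩
/-- The hybrid unit `𝐡`. -/
def hu : Hybrid R := ⟨0, 0, 0, 1⟩

end Hybrid

noncomputable section

open Quaternion

/-- Hybrid quaternions: hybrid numbers with quaternion coefficients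
(the quaternion units commute with the hybrid units). -/
abbrev HQ := Hybrid (ℍ[ℝ])

/-- The quaternion unit `i` in the hybrid quaternion algebra. -/
def qi : HQ := ⟨⟨0, 1, 0, 0⟩, 0, 0, 0⟩
/-- The quaternion unit `j` in the hybrid quaternion algebra. -/
def qj : HQ := ⟨⟨0, 0, 1, 0⟩, 0, 0, 0⟩
/-- The quaternion unit `k` in the hybrid quaternion algebra. -/
def qk : HQ := ⟨⟨0, 0, 0, 1⟩, 0, 0, 0⟩

/-- Embedding of the real quaternions into the hybrid quaternions. -/
def eQ (q : ℍ[ℝ]) : HQ := ⟨q, 0, 0, 0⟩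
/-- Embedding of the hybrid numbers into the hybrid quaternions. -/
def eH (z : Hybrid ℝ) : HQ :=
  ⟨⟨z.re, 0, 0, 0⟩, ⟨z.imI, 0, 0, 0⟩, ⟨z.imE, 0, 0, 0⟩, ⟨z.imH, 0, 0, 0⟩⟩

/-- Fibonacci numbers, as real numbers. -/
def F (n : ℕ) : ℝ := Nat.fib n

/-- Lucas numbers, as real numbers. -/
def lucas : ℕ → ℝ
  | 0 => 2
  | 1 => 1
  | n + 2 => lucas (n + 1) + lucas n

/-- The Fibonacci quaternion `F̃ₘ = Fₘ + i F_{m+1} + j F_{m+2} + k F_{m+3}`. -/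
def fq (m : ℕ) : ℍ[ℝ] := ⟨F m, F (m + 1), F (m + 2), F (m + 3)⟩
/-- The Lucas quaternion `L̃ₘ`. -/
def lq (m : ℕ) : ℍ[ℝ] := ⟨lucas m, lucas (m + 1), lucas (m + 2), lucas (m + 3)⟩
/-- The Fibonacci hybrid number `F̆ₘ = Fₘ + 𝐢 F_{m+1} + ε F_{m+2} + 𝐡 F_{m+3}`. -/
def fh (m : ℕ) : Hybrid ℝ := ⟨F m, F (m + 1), F (m + 2), F (m + 3)⟩
/-- The Lucas hybrid number `L̆ₘ`. -/
def lh (m : ℕ) : Hybrid ℝ := ⟨lucas m, lucas (m + 1), lucas (m + 2), lucas (m + 3)⟩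
/-- The Fibonacci hybrid quaternion
`F̂ₙ = F̃ₙ + 𝐢 F̃_{n+1} + ε F̃_{n+2} + 𝐡 F̃_{n+3}
    = F̆ₙ + i F̆_{n+1} + j F̆_{n+2} + k F̆_{n+3}`. -/
def Fhat (n : ℕ) : HQ := ⟨fq n, fq (n + 1), fq (n + 2), fq (n + 3)⟩
/-- The Lucas hybrid quaternion `L̂ₙ`. -/
def Lhat (n : ℕ) : HQ := ⟨lq n, lq (n + 1), lq (n + 2), lq (n + 3)⟩

/-- `α = (1 + √5)/2`. -/
def ga : ℝ := (1 + Real.sqrt 5) / 2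
/-- `β = (1 - √5)/2`. -/
def gb : ℝ := (1 - Real.sqrt 5) / 2

/-- `x* = 1 + 𝐢 x + ε x² + 𝐡 x³` (a hybrid number with real coefficients). -/
def hstar (x : ℝ) : HQ :=
  ⟨1, ⟨x, 0, 0, 0⟩, ⟨x ^ 2, 0, 0, 0⟩, ⟨x ^ 3, 0, 0, 0⟩⟩
/-- `x̲ = 1 + i x + j x² + k x³` (a quaternion with real coefficients). -/
def qund (x : ℝ) : HQ := eQ ⟨1, x, x ^ 2, x ^ 3⟩



namespace Hybrid
variable {R : Type*} [Ring R] {S : Type*} [SMul S R]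
@[simp] lemma mul_re' (x y : Hybrid R) : (x * y).re =
    x.re * y.re - x.imI * y.imI + x.imI * y.imE + x.imE * y.imI + x.imH * y.imH := rfl
@[simp] lemma mul_imI' (x y : Hybrid R) : (x * y).imI =
    x.re * y.imI + x.imI * y.re + x.imI * y.imH - x.imH * y.imI := rfl
@[simp] lemma mul_imE' (x y : Hybrid R) : (x * y).imE =
    x.re * y.imE + x.imE * y.re + x.imI * y.imH - x.imH * y.imI
      + x.imH * y.imE - x.imE * y.imH := rfl
@[simp] lemma mul_imH' (x y : Hybrid R) : (x * y).imH =
    x.re * y.imH + x.imH * y.re + x.imE * y.imI - x.imI * y.imE := rfl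
@[simp] lemma smul_re' (s : S) (x : Hybrid R) : (s • x).re = s • x.re := rfl
@[simp] lemma smul_imI' (s : S) (x : Hybrid R) : (s • x).imI = s • x.imI := rfl
@[simp] lemma smul_imE' (s : S) (x : Hybrid R) : (s • x).imE = s • x.imE := rfl
@[simp] lemma smul_imH' (s : S) (x : Hybrid R) : (s • x).imH = s • x.imH := rfl
@[simp] lemma sub_re' (x y : Hybrid R) : (x - y).re = x.re - y.re := rfl
@[simp] lemma sub_imI' (x y : Hybrid R) : (x - y).imI = x.imI - y.imI := rfl
@[simp] lemma sub_imE' (x y : Hybrid R) : (x - y).imE = x.imE - y.imE := rfl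
@[simp] lemma sub_imH' (x y : Hybrid R) : (x - y).imH = x.imH - y.imH := rfl
end Hybrid

lemma sqrt5_sq : Real.sqrt 5 * Real.sqrt 5 = 5 := Real.mul_self_sqrt (by norm_num)

lemma ga_sq : ga ^ 2 = ga + 1 := by unfold ga; nlinarith [sqrt5_sq]
lemma gb_sq : gb ^ 2 = gb + 1 := by unfold gb; nlinarith [sqrt5_sq]

lemma F_binet (m : ℕ) : (ga - gb) * F m = ga ^ m - gb ^ m := by
  induction m using Nat.twoStepInduction with
  | zero => simp [F]
  | one => simp [F, ga, gb]
  | more m ih1 ih2 =>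
    have hF : F (m + 2) = F (m + 1) + F m := by simp [F, Nat.fib_add_two]; ring
    have ha : ga ^ (m + 2) = ga ^ (m + 1) + ga ^ m := by
      have : ga ^ (m + 2) = ga ^ m * ga ^ 2 := by ring
      rw [this, ga_sq]; ring
    have hb : gb ^ (m + 2) = gb ^ (m + 1) + gb ^ m := by
      have : gb ^ (m + 2) = gb ^ m * gb ^ 2 := by ring
      rw [this, gb_sq]; ring
    rw [hF, ha, hb]; linarith [ih1, ih2]

lemma gagb : ga - gb = Real.sqrt 5 := by unfold ga gb; ring

lemma F_eq (m : ℕ) : F m = (ga - gb)⁻¹ * (ga ^ m - gb ^ m) := by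
  rw [← F_binet m, gagb]
  have h5 : Real.sqrt 5 ≠ 0 := by positivity
  field_simp

/-- Binet formula for Fibonacci hybrid quaternions,
`F̂ₙ = (α* α̲ αⁿ - β* β̲ βⁿ)/(α - β)`. -/
theorem fib_hybrid_quaternion_binet (n : ℕ) :
    Fhat n =
      (ga - gb)⁻¹ • (ga ^ n • (hstar ga * qund ga) - gb ^ n • (hstar gb * qund gb)) := by
  ext <;>
    simp [Fhat, fq, Quaternion.re_mul, Quaternion.imI_mul, Quaternion.imJ_mul, Quaternion.imK_mul] <;>
    simp [hstar, qund, eQ, QuaternionAlgebra.ext_iff] <;>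
    rw [F_eq] <;> ring
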